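/- For every odd n, the class Sigma^0_n (lightface, over Cantor space) is properly contained in Sigma^0_n[Pi^0_1], the variant where the innermost predicate is allowed to be co-computably-enumerable rather than computable. -/

import Mathlib

open Filter Topology

abbrev Cantor := ℕ → Bool

/-- The length-`n` prefix of an infinite binary sequence, as a list. -/
def pref (X : ℕ → Bool) (n : ℕ) : List Bool := (List.range n).map X

/-- A predicate is computably enumerable (c.e., Σ⁰₁). -/
def CEPred {α : Type} [Primcodable α] (P : α → Prop) : Prop :=
  ∃ f : α →. Unit, Partrec f ∧ ∀ a, P a ↔ (f a).Dom

/-- A predicate (of the outer quantified numbers together with a finite prefix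
of the sequence) is Δ⁰₁, i.e. computable. -/
def DeltaPred (P : List ℕ → List Bool → Prop) : Prop :=
  ComputablePred fun p : List ℕ × List Bool => P p.1 p.2

/-- A predicate is Π⁰₁, i.e. co-computably enumerable. -/
def PiPred (P : List ℕ → List Bool → Prop) : Prop :=
  CEPred fun p : List ℕ × List Bool => ¬ P p.1 p.2

/-- `AltQ n b P ks A`: `n` alternating quantifiers (starting with `∃` if `b`,
with `∀` otherwise) applied to the predicate `P`, where the innermost
quantified variable is the length of the prefix of `A` handed to `P`, and `ks`
accumulates the previously quantified numbers. -/
def AltQ : ℕ → Bool → (List ℕ → List Bool → Prop) → List ℕ → Cantor → Prop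
  | 0, _, P, ks, _ => P ks []
  | 1, true, P, ks, A => ∃ k, P ks (pref A k)
  | 1, false, P, ks, A => ∀ k, P ks (pref A k)
  | n+2, true, P, ks, A => ∃ k, AltQ (n+1) false P (ks ++ [k]) A
  | n+2, false, P, ks, A => ∀ k, AltQ (n+1) true P (ks ++ [k]) A

/-- `X ∈ Σ⁰ₙ[C]`: definable with `n` alternating quantifiers starting with
`∃`, over some predicate in the class `C`. -/
def SigmaIn (n : ℕ) (C : (List ℕ → List Bool → Prop) → Prop) (X : Set Cantor) : Prop :=
  ∃ P, C P ∧ ∀ A : Cantor, A ∈ X ↔ AltQ n true P [] A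

/-- `X ∈ Π⁰ₙ[C]`: definable with `n` alternating quantifiers starting with
`∀`, over some predicate in the class `C`. -/
def PiIn (n : ℕ) (C : (List ℕ → List Bool → Prop) → Prop) (X : Set Cantor) : Prop :=
  ∃ P, C P ∧ ∀ A : Cantor, A ∈ X ↔ AltQ n false P [] A

open Nat.Partrec (Code)
open Nat.Partrec.Code

theorem cePred_of_re {α : Type} [Primcodable α] {P : α → Prop} (h : REPred P) : CEPred P := by
  refine ⟨fun a => Part.assert (P a) fun _ => Part.some (), h, fun a => ?_⟩
  constructor
  · intro hp; exact ⟨hp, trivial⟩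
  · rintro ⟨hp, -⟩; exact hp

-- tw: number of leading `false`s
def tw : List Bool → ℕ
  | [] => 0
  | b :: s => bif b then 0 else tw s + 1

theorem tw_primrec : Primrec tw := by
  have : Primrec fun s : List Bool =>
      @List.rec Bool (fun _ => ℕ) 0 (fun (b : Bool) (_ : List Bool) (ih : ℕ) => bif b then 0 else ih + 1) s := by
    have h : Primrec₂ fun (_ : List Bool) (p : Bool × List Bool × ℕ) =>
        bif p.1 then 0 else p.2.2 + 1 :=
      (Primrec.cond (Primrec.fst.comp Primrec.snd) (Primrec.const 0)
        (Primrec.succ.comp (Primrec.snd.comp (Primrec.snd.comp Primrec.snd))))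
    exact Primrec.list_rec Primrec.id (Primrec.const 0) h
  refine this.of_eq fun s => ?_
  induction s with
  | nil => rfl
  | cons b s ih => simp [tw, ← ih]

theorem tw_le (s : List Bool) : tw s ≤ s.length := by
  induction s with
  | nil => simp [tw]
  | cons b s ih =>
    cases b
    · simp only [tw, List.length_cons, Bool.cond_false]; omega
    · simp [tw]

theorem true_mem_iff (s : List Bool) : true ∈ s ↔ tw s < s.length := by
  induction s with
  | nil => simp [tw]
  | cons b s ih =>
    cases b
    · simp only [tw, List.mem_cons, List.length_cons, Bool.cond_false]
      constructor
      · rintro (h|h)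
        · exact absurd h (by simp)
        · have := (ih).1 h; omega
      · intro h; right; exact (ih).2 (by omega)
    · simp [tw]

theorem tw_replicate (m : ℕ) (t : List Bool) :
    tw (List.replicate m false ++ true :: t) = m := by
  induction m with
  | zero => simp [tw]
  | succ m ih => simp [List.replicate_succ, tw, ih]

theorem decomp_of_mem {s : List Bool} (h : true ∈ s) :
    s = List.replicate (tw s) false ++ true :: s.drop (tw s + 1) := by
  induction s with
  | nil => simp at h
  | cons b s ih =>
    cases b
    · simp at h
      have := ih h
      simp [tw, List.replicate_succ]
      exact this
    · simp [tw]

-- pref lemmas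
theorem pref_length (A : Cantor) (k : ℕ) : (pref A k).length = k := by simp [pref]

theorem pref_succ (A : Cantor) (k : ℕ) : pref A (k + 1) = pref A k ++ [A k] := by
  simp [pref, List.range_succ]

theorem pref_all_false {A : Cantor} {k : ℕ} (h : ∀ i < k, A i = false) :
    pref A k = List.replicate k false := by
  induction k with
  | zero => simp [pref]
  | succ k ih =>
    rw [pref_succ, ih (fun i hi => h i (by omega)), h k (by omega),
      List.replicate_succ']

theorem mem_pref {A : Cantor} {i k : ℕ} (hik : i < k) (h : A i = true) :
    true ∈ pref A k := by
  simp only [pref, List.mem_map]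
  exact ⟨i, by simp [hik], h⟩

def InCyl (A : Cantor) (m : ℕ) : Prop := (∀ i < m, A i = false) ∧ A m = true

theorem InCyl_unique {A : Cantor} {m m' : ℕ} (h : InCyl A m) (h' : InCyl A m') :
    m = m' := by
  by_contra hne
  rcases Nat.lt_or_ge m m' with hlt | hge
  · have := h'.1 m hlt; rw [h.2] at this; exact absurd this (by simp)
  · have hlt : m' < m := by omega
    have := h.1 m' hlt; rw [h'.2] at this; exact absurd this (by simp)

theorem pref_decomp {A : Cantor} {m : ℕ} (h : InCyl A m) (j : ℕ) :
    ∃ t : List Bool, pref A (m + 1 + j) = List.replicate m false ++ true :: t := by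
  induction j with
  | zero =>
    refine ⟨[], ?_⟩
    rw [pref_succ, pref_all_false h.1, h.2]
  | succ j ih =>
    obtain ⟨t, ht⟩ := ih
    refine ⟨t ++ [A (m + 1 + j)], ?_⟩
    have : m + 1 + (j + 1) = (m + 1 + j) + 1 := by omega
    rw [this, pref_succ, ht]
    simp

theorem tw_pref {A : Cantor} {m : ℕ} (h : InCyl A m) (j : ℕ) :
    tw (pref A (m + 1 + j)) = m := by
  obtain ⟨t, ht⟩ := pref_decomp h j
  rw [ht, tw_replicate]

theorem pref_get? {A : Cantor} {i k : ℕ} (h : i < k) : (pref A k)[i]? = some (A i) := by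
  simp only [pref, List.getElem?_map]
  rw [List.getElem?_range h]
  rfl

theorem InCyl_of_pref_eq {A : Cantor} {k m : ℕ} {t : List Bool}
    (hdec : pref A k = List.replicate m false ++ true :: t) : InCyl A m ∧ m < k := by
  have hk : k = m + 1 + t.length := by
    have := congrArg List.length hdec
    simp only [pref_length, List.length_append, List.length_replicate, List.length_cons] at this
    omega
  have hmk : m < k := by omega
  constructor
  · constructor
    · intro i hi
      have h1 : (pref A k)[i]? = some (A i) := pref_get? (by omega)
      rw [hdec, List.getElem?_append] at h1
      simp only [List.length_replicate, hi, if_pos, List.getElem?_replicate] at h1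
      exact (Option.some_injective _ h1.symm)
    · have h1 : (pref A k)[m]? = some (A m) := pref_get? hmk
      rw [hdec, List.getElem?_append] at h1
      simp only [List.length_replicate, lt_irrefl, if_neg, Nat.sub_self] at h1
      simp only [List.getElem?_cons_zero] at h1
      exact (Option.some_injective _ h1.symm)
  · exact hmk

theorem decomp_to_InCyl {A : Cantor} {k : ℕ} (h : true ∈ pref A k) :
    InCyl A (tw (pref A k)) ∧ tw (pref A k) < k :=
  InCyl_of_pref_eq (decomp_of_mem h)

-- the universal hierarchy on ℕ
def U1 (e x : ℕ) : Prop := (eval (Denumerable.ofNat Code e) x).Dom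

def U : ℕ → ℕ → ℕ → Prop
  | 0, _, _ => False
  | 1, e, x => U1 e x
  | n + 2, e, x => ∃ k, ¬ U (n + 1) e (Nat.pair x k)

theorem U_one (e x : ℕ) : U 1 e x ↔ U1 e x := Iff.rfl
theorem U_two (n e x : ℕ) : U (n + 2) e x ↔ ∃ k, ¬ U (n + 1) e (Nat.pair x k) := Iff.rfl

-- the arithmetical hierarchy of predicates on ℕ
def Arith : ℕ → Bool → (ℕ → Prop) → Prop
  | 0, _, Q => ComputablePred Q
  | n + 1, b, Q => ∃ R, Arith n (!b) R ∧
      ∀ m, Q m ↔ cond b (∃ k, R (Nat.pair m k)) (∀ k, R (Nat.pair m k))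

theorem Arith.of_iff {n b} {Q Q' : ℕ → Prop} (h : Arith n b Q) (H : ∀ m, Q m ↔ Q' m) :
    Arith n b Q' := by
  have : Q = Q' := funext fun m => propext (H m)
  rwa [← this]

theorem computablePred_comp {α β : Type} [Primcodable α] [Primcodable β]
    {Q : β → Prop} {f : α → β} (hQ : ComputablePred Q) (hf : Computable f) :
    ComputablePred fun a => Q (f a) := by
  obtain ⟨g, hg, rfl⟩ := ComputablePred.computable_iff.1 hQ
  exact ComputablePred.computable_iff.2 ⟨fun a => g (f a), hg.comp hf, rfl⟩

theorem arith_comp : ∀ (n : ℕ) (b : Bool) {Q : ℕ → Prop} {f : ℕ → ℕ},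
    Arith n b Q → Computable f → Arith n b fun m => Q (f m) := by
  intro n
  induction n with
  | zero => intro b Q f hQ hf; exact computablePred_comp hQ hf
  | succ n ih =>
    rintro b Q f ⟨R, hR, hQ⟩ hf
    refine ⟨fun y => R (Nat.pair (f y.unpair.1) y.unpair.2), ?_, ?_⟩
    · exact ih (!b) hR
        (Primrec₂.natPair.to_comp.comp
          (hf.comp ((Primrec.fst.comp Primrec.unpair).to_comp))
          ((Primrec.snd.comp Primrec.unpair).to_comp))
    · intro m
      have hs : ∀ k, Nat.pair (f (Nat.pair m k).unpair.1) (Nat.pair m k).unpair.2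
          = Nat.pair (f m) k := by intro k; simp [Nat.unpair_pair]
      cases b
      · simp only [cond_false]
        constructor
        · intro h k; rw [hs k]; exact ((hQ (f m)).1 h) k
        · intro h; exact (hQ (f m)).2 (fun k => by have := h k; rwa [← hs k])
      · simp only [cond_true]
        constructor
        · intro h
          obtain ⟨k, hk⟩ := (hQ (f m)).1 h
          exact ⟨k, by rw [hs k]; exact hk⟩
        · rintro ⟨k, hk⟩
          rw [hs k] at hk
          exact (hQ (f m)).2 ⟨k, hk⟩

theorem arith_not : ∀ (n : ℕ) (b : Bool) {Q : ℕ → Prop},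
    Arith n b Q → Arith n (!b) fun m => ¬ Q m := by
  intro n
  induction n with
  | zero => intro b Q hQ; exact hQ.not
  | succ n ih =>
    rintro b Q ⟨R, hR, hQ⟩
    refine ⟨fun y => ¬ R y, by simpa using ih (!b) hR, ?_⟩
    intro m
    cases b
    · simp only [cond_false, Bool.not_false, cond_true] at hQ ⊢
      rw [hQ m]
      push_neg
      rfl
    · simp only [cond_true, Bool.not_true, cond_false] at hQ ⊢
      rw [hQ m]
      push_neg
      rfl

theorem arith_univ : ∀ (n : ℕ) {Q : ℕ → Prop},
    Arith (n + 1) true Q → ∃ e, ∀ m, Q m ↔ U (n + 1) e m := by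
  intro n
  induction n with
  | zero =>
    rintro Q ⟨R, hR, hQ⟩
    obtain ⟨g, hg, rfl⟩ := ComputablePred.computable_iff.1 hR
    have hp : Partrec₂ fun (m k : ℕ) => (Part.some (g (Nat.pair m k)) : Part Bool) :=
      Computable₂.partrec₂ (Computable.comp hg Primrec₂.natPair.to_comp)
    have hrf : Partrec fun m => Nat.rfind (fun k => (Part.some (g (Nat.pair m k)) : Part Bool)) :=
      Partrec.rfind hp
    obtain ⟨c, hc⟩ := exists_code.1 (Partrec.nat_iff.1 hrf)
    refine ⟨Encodable.encode c, fun m => ?_⟩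
    have hU : U 1 (Encodable.encode c) m ↔
        (Nat.rfind fun k => (Part.some (g (Nat.pair m k)) : Part Bool)).Dom := by
      rw [U_one]
      unfold U1
      rw [Denumerable.ofNat_encode]
      rw [congrFun hc m]
    rw [hU, Nat.rfind_dom (p := fun k => (Part.some (g (Nat.pair m k)) : Part Bool))]
    rw [hQ m]
    simp only [cond_true]
    constructor
    · rintro ⟨k, hk⟩
      exact ⟨k, Part.mem_some_iff.2 hk.symm, fun {_} _ => trivial⟩
    · rintro ⟨k, hk, -⟩
      exact ⟨k, (Part.mem_some_iff.1 hk).symm⟩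
  | succ n ih =>
    rintro Q ⟨R, hR, hQ⟩
    obtain ⟨e, he⟩ := ih (arith_not (n + 1) false hR)
    refine ⟨e, fun m => ?_⟩
    rw [U_two]
    simp only [cond_true] at hQ
    rw [hQ m]
    constructor
    · rintro ⟨k, hk⟩; exact ⟨k, fun h => ((he (Nat.pair m k)).2 h) hk⟩
    · rintro ⟨k, hk⟩
      refine ⟨k, ?_⟩
      by_contra hnot
      exact hk ((he (Nat.pair m k)).1 hnot)

-- The witness matrix
def QmatArg (ks : List ℕ) (s : List Bool) : ℕ :=
  List.foldl Nat.pair (tw s) ((ks ++ [s.length - (tw s + 1)]).tail)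

def Qmat (ks : List ℕ) (s : List Bool) : Prop :=
  true ∈ s ∧ ¬ U1 (tw s) (QmatArg ks s)

theorem qmatArg_primrec : Primrec fun p : List ℕ × List Bool => QmatArg p.1 p.2 := by
  have hf : Primrec fun p : List ℕ × List Bool =>
      (p.1 ++ [p.2.length - (tw p.2 + 1)]).tail :=
    Primrec.list_tail.comp
      (Primrec.list_append.comp Primrec.fst
        (Primrec.list_cons.comp
          (Primrec.nat_sub.comp (Primrec.list_length.comp Primrec.snd)
            (Primrec.succ.comp (tw_primrec.comp Primrec.snd)))
          (Primrec.const [])))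
  have hg : Primrec fun p : List ℕ × List Bool => tw p.2 := tw_primrec.comp Primrec.snd
  have hh : Primrec₂ fun (_ : List ℕ × List Bool) (q : ℕ × ℕ) => Nat.pair q.1 q.2 :=
    Primrec₂.natPair.comp (Primrec.fst.comp Primrec.snd) (Primrec.snd.comp Primrec.snd)
  exact (Primrec.list_foldl hf hg hh).of_eq fun p => rfl

theorem piPred_Qmat : PiPred Qmat := by
  unfold PiPred CEPred
  have hc : Computable fun p : List ℕ × List Bool => decide (tw p.2 < p.2.length) :=
    Primrec.to_comp
      (Primrec.nat_lt.comp (tw_primrec.comp Primrec.snd) (Primrec.list_length.comp Primrec.snd)).decide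
  have hthen : Partrec fun p : List ℕ × List Bool =>
      (eval (Denumerable.ofNat Code (tw p.2)) (QmatArg p.1 p.2)).map fun _ => () := by
    apply Partrec.map
    · exact eval_part.comp
        ((Computable.ofNat Code).comp (Primrec.to_comp (tw_primrec.comp Primrec.snd)))
        qmatArg_primrec.to_comp
    · exact (Computable.const ()).to₂
  have hF : Partrec fun p : List ℕ × List Bool =>
      cond (decide (tw p.2 < p.2.length))
        ((eval (Denumerable.ofNat Code (tw p.2)) (QmatArg p.1 p.2)).map fun _ => ())
        (Part.some ()) :=
    Partrec.cond hc hthen (Partrec.const' (Part.some ()))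
  refine ⟨_, hF, fun p => ?_⟩
  by_cases hm : true ∈ p.2
  · have hd : decide (tw p.2 < p.2.length) = true :=
      decide_eq_true ((true_mem_iff p.2).1 hm)
    rw [hd]
    simp only [cond_true]
    have hdom : ((eval (Denumerable.ofNat Code (tw p.2)) (QmatArg p.1 p.2)).map
        fun _ => ()).Dom ↔ (eval (Denumerable.ofNat Code (tw p.2)) (QmatArg p.1 p.2)).Dom :=
      Iff.rfl
    rw [hdom]
    simp only [Qmat, hm, true_and, U1]
    tauto
  · have hd : decide (tw p.2 < p.2.length) = false := by
      simp only [decide_eq_false_iff_not]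
      rw [← true_mem_iff]
      exact hm
    rw [hd]
    simp only [cond_false]
    simp [Qmat, hm]

theorem tail_append_of_ne_nil {ks : List ℕ} (hks : ks ≠ []) (l : List ℕ) :
    (ks ++ l).tail = ks.tail ++ l := by
  obtain ⟨a, ks', rfl⟩ := List.exists_cons_of_ne_nil hks
  rfl

theorem qmatArg_eq {ks : List ℕ} (hks : ks ≠ []) (s : List Bool) :
    QmatArg ks s =
      Nat.pair (List.foldl Nat.pair (tw s) ks.tail) (s.length - (tw s + 1)) := by
  unfold QmatArg
  rw [tail_append_of_ne_nil hks]
  simp [List.foldl_append]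

theorem foldl_tail_append {ks : List ℕ} (hks : ks ≠ []) (k m : ℕ) :
    List.foldl Nat.pair m (ks ++ [k]).tail =
      Nat.pair (List.foldl Nat.pair m ks.tail) k := by
  rw [tail_append_of_ne_nil hks]
  simp [List.foldl_append]

theorem altq_one {ks : List ℕ} (hks : ks ≠ []) (A : Cantor) :
    AltQ 1 true Qmat ks A ↔
      ∃ m, InCyl A m ∧ U 2 m (List.foldl Nat.pair m ks.tail) := by
  show (∃ k, Qmat ks (pref A k)) ↔ _
  constructor
  · rintro ⟨k, hmem, hU⟩
    obtain ⟨hic, hlt⟩ := decomp_to_InCyl hmem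
    refine ⟨tw (pref A k), hic, ?_⟩
    rw [U_two]
    refine ⟨k - (tw (pref A k) + 1), ?_⟩
    rw [qmatArg_eq hks, pref_length] at hU
    exact hU
  · rintro ⟨m, hic, hU2⟩
    rw [U_two] at hU2
    obtain ⟨j, hj⟩ := hU2
    refine ⟨m + 1 + j, mem_pref (by omega) hic.2, ?_⟩
    rw [qmatArg_eq hks, pref_length, tw_pref hic j]
    have : m + 1 + j - (m + 1) = j := by omega
    rw [this]
    exact hj

theorem altq_main : ∀ (i : ℕ) (ks : List ℕ), ks ≠ [] → ∀ A : Cantor,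
    (Odd (i + 1) → (AltQ (i + 1) true Qmat ks A ↔
      ∃ m, InCyl A m ∧ U (i + 2) m (List.foldl Nat.pair m ks.tail))) ∧
    (Even (i + 1) → (AltQ (i + 1) false Qmat ks A ↔
      ∃ m, InCyl A m ∧ ¬ U (i + 2) m (List.foldl Nat.pair m ks.tail))) := by
  intro i
  induction i with
  | zero =>
    intro ks hks A
    refine ⟨fun _ => altq_one hks A, fun he => ?_⟩
    rw [Nat.even_iff] at he
    omega
  | succ i ih =>
    intro ks hks A
    constructor
    · intro hodd
      have heven : Even (i + 1) := by
        rw [Nat.odd_iff] at hodd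
        rw [Nat.even_iff]
        omega
      show (∃ k, AltQ (i + 1) false Qmat (ks ++ [k]) A) ↔ _
      have hstep := fun k => (ih (ks ++ [k]) (by simp) A).2 heven
      constructor
      · rintro ⟨k, hk⟩
        obtain ⟨m, hic, hU⟩ := (hstep k).1 hk
        rw [foldl_tail_append hks] at hU
        exact ⟨m, hic, (U_two _ _ _).2 ⟨k, hU⟩⟩
      · rintro ⟨m, hic, hU⟩
        obtain ⟨k, hk⟩ := (U_two _ _ _).1 hU
        refine ⟨k, (hstep k).2 ⟨m, hic, ?_⟩⟩
        rw [foldl_tail_append hks]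
        exact hk
    · intro heven
      have hodd : Odd (i + 1) := by
        rw [Nat.even_iff] at heven
        rw [Nat.odd_iff]
        omega
      show (∀ k, AltQ (i + 1) true Qmat (ks ++ [k]) A) ↔ _
      have hstep := fun k => (ih (ks ++ [k]) (by simp) A).1 hodd
      constructor
      · intro h
        obtain ⟨m₀, hic₀, -⟩ := (hstep 0).1 (h 0)
        refine ⟨m₀, hic₀, ?_⟩
        rw [U_two]
        push_neg
        intro k
        obtain ⟨m, hic, hU⟩ := (hstep k).1 (h k)
        rw [foldl_tail_append hks] at hU
        rwa [InCyl_unique hic₀ hic]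
      · rintro ⟨m, hic, hU⟩ k
        rw [U_two] at hU
        push_neg at hU
        refine (hstep k).2 ⟨m, hic, ?_⟩
        rw [foldl_tail_append hks]
        exact hU k

theorem altq_top {n : ℕ} (hn : Odd n) (A : Cantor) :
    AltQ n true Qmat [] A ↔ ∃ m, InCyl A m ∧ ¬ U n m m := by
  match n, hn with
  | 0, hn => rw [Nat.odd_iff] at hn; omega
  | 1, _ =>
    show (∃ k, Qmat [] (pref A k)) ↔ _
    have harg : ∀ s : List Bool, QmatArg [] s = tw s := fun s => rfl
    constructor
    · rintro ⟨k, hmem, hU⟩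
      obtain ⟨hic, -⟩ := decomp_to_InCyl hmem
      refine ⟨tw (pref A k), hic, ?_⟩
      rw [U_one]
      rw [harg] at hU
      exact hU
    · rintro ⟨m, hic, hU⟩
      refine ⟨m + 1, mem_pref (by omega) hic.2, ?_⟩
      rw [harg]
      have htw : tw (pref A (m + 1)) = m := by
        have := tw_pref hic 0
        simpa using this
      rw [htw]
      rw [U_one] at hU
      exact hU
  | (i + 2), hn =>
    show (∃ k, AltQ (i + 1) false Qmat [k] A) ↔ _
    have heven : Even (i + 1) := by
      rw [Nat.odd_iff] at hn
      rw [Nat.even_iff]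
      omega
    have hstep := fun k : ℕ => (altq_main i [k] (by simp) A).2 heven
    constructor
    · rintro ⟨k, hk⟩
      obtain ⟨m, hic, hU⟩ := (hstep k).1 hk
      simpa using ⟨m, hic, hU⟩
    · rintro ⟨m, hic, hU⟩
      exact ⟨0, (hstep 0).2 ⟨m, hic, by simpa using hU⟩⟩

def seqOf (m : ℕ) : Cantor := fun i => decide (i = m)

def dec (x : ℕ) : ℕ × List ℕ := Denumerable.ofNat (ℕ × List ℕ) x

theorem InCyl_seqOf (m m' : ℕ) : InCyl (seqOf m) m' ↔ m' = m := by
  constructor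
  · intro h
    exact of_decide_eq_true h.2
  · rintro rfl
    exact ⟨fun i hi => decide_eq_false (by omega), decide_eq_true rfl⟩

theorem pref_seqOf_primrec : Primrec₂ fun (m k : ℕ) => pref (seqOf m) k := by
  have hg : Primrec₂ fun (p : ℕ × ℕ) (i : ℕ) => decide (i = p.1) :=
    (Primrec.eq.comp Primrec.snd (Primrec.fst.comp Primrec.fst)).decide
  exact (Primrec.list_map (Primrec.list_range.comp Primrec.snd) hg).of_eq fun p => rfl

theorem altq_arith {P : List ℕ → List Bool → Prop} (hP : DeltaPred P) :
    ∀ (j : ℕ) (b : Bool),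
      Arith j b fun x => AltQ j b P (dec x).2 (seqOf (dec x).1) := by
  have hdec : Computable dec := Computable.ofNat _
  have hu1 : Computable fun y : ℕ => y.unpair.1 :=
    (Primrec.fst.comp Primrec.unpair).to_comp
  have hu2 : Computable fun y : ℕ => y.unpair.2 :=
    (Primrec.snd.comp Primrec.unpair).to_comp
  have hdecm : Computable fun y : ℕ => dec y.unpair.1 := hdec.comp hu1
  intro j
  induction j with
  | zero =>
    intro b
    show ComputablePred _
    have hmap : Computable fun x : ℕ => ((dec x).2, ([] : List Bool)) :=
      Computable.pair (Computable.snd.comp hdec) (Computable.const [])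
    exact (computablePred_comp hP hmap).of_eq fun x => Iff.rfl
  | succ i ih =>
    match i, ih with
    | 0, _ =>
      intro b
      have hmap : Computable fun y : ℕ =>
          ((dec y.unpair.1).2, pref (seqOf (dec y.unpair.1).1) y.unpair.2) :=
        Computable.pair (Computable.snd.comp hdecm)
          (pref_seqOf_primrec.to_comp.comp (Computable.fst.comp hdecm) hu2)
      have hR : ComputablePred fun y : ℕ =>
          P (dec y.unpair.1).2 (pref (seqOf (dec y.unpair.1).1) y.unpair.2) :=
        (computablePred_comp hP hmap).of_eq fun y => Iff.rfl
      cases b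
      · show Arith 1 false _
        refine ⟨_, hR, fun m => ?_⟩
        simp only [cond_false]
        show (∀ k, P (dec m).2 (pref (seqOf (dec m).1) k)) ↔ _
        constructor
        · intro h k
          simpa only [Nat.unpair_pair] using h k
        · intro h k
          simpa only [Nat.unpair_pair] using h k
      · show Arith 1 true _
        refine ⟨_, hR, fun m => ?_⟩
        simp only [cond_true]
        show (∃ k, P (dec m).2 (pref (seqOf (dec m).1) k)) ↔ _
        constructor
        · rintro ⟨k, h⟩
          exact ⟨k, by simpa only [Nat.unpair_pair] using h⟩
        · rintro ⟨k, h⟩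
          exact ⟨k, by simpa only [Nat.unpair_pair] using h⟩
    | i + 1, ih =>
      intro b
      have hg : Computable fun y : ℕ =>
          Encodable.encode ((dec y.unpair.1).1, (dec y.unpair.1).2 ++ [y.unpair.2]) := by
        refine Computable.encode.comp (Computable.pair (Computable.fst.comp hdecm) ?_)
        exact Primrec.list_append.to_comp.comp (Computable.snd.comp hdecm)
          (Primrec.list_cons.to_comp.comp hu2 (Computable.const []))
      cases b
      · show Arith (i + 2) false _
        refine ⟨_, arith_comp (i + 1) true (ih true) hg, fun m => ?_⟩
        simp only [cond_false]
        show (∀ k, AltQ (i + 1) true P ((dec m).2 ++ [k]) (seqOf (dec m).1)) ↔ _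
        constructor
        · intro h k
          have := h (Nat.pair m k).unpair.2
          simp only [Nat.unpair_pair] at this ⊢
          simpa only [dec, Denumerable.ofNat_encode] using this
        · intro h k
          have := h k
          simp only [Nat.unpair_pair] at this
          simpa only [dec, Denumerable.ofNat_encode] using this
      · show Arith (i + 2) true _
        refine ⟨_, arith_comp (i + 1) false (ih false) hg, fun m => ?_⟩
        simp only [cond_true]
        show (∃ k, AltQ (i + 1) false P ((dec m).2 ++ [k]) (seqOf (dec m).1)) ↔ _
        constructor
        · rintro ⟨k, h⟩
          refine ⟨k, ?_⟩
          simp only [Nat.unpair_pair]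
          simpa only [dec, Denumerable.ofNat_encode] using h
        · rintro ⟨k, h⟩
          refine ⟨k, ?_⟩
          simp only [Nat.unpair_pair] at h
          simpa only [dec, Denumerable.ofNat_encode] using h

/-- For every odd `n`, the lightface class Σ⁰ₙ is properly contained in
Σ⁰ₙ[Π⁰₁], the variant whose innermost predicate may be co-c.e. -/
theorem Sigma0n_ssubset_Sigma0n_Pi01 (n : ℕ) (hn : Odd n) :
    (∀ X : Set Cantor, SigmaIn n DeltaPred X → SigmaIn n PiPred X) ∧
    (∃ X : Set Cantor, SigmaIn n PiPred X ∧ ¬ SigmaIn n DeltaPred X) := by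
  constructor
  · rintro X ⟨P, hP, hiff⟩
    exact ⟨P, cePred_of_re (ComputablePred.to_re (ComputablePred.not hP)), hiff⟩
  · refine ⟨{A : Cantor | ∃ m, InCyl A m ∧ ¬ U n m m},
      ⟨Qmat, piPred_Qmat, fun A => (altq_top hn A).symm⟩, ?_⟩
    rintro ⟨P, hP, hiff⟩
    have hmap : Computable fun m : ℕ => Encodable.encode (m, ([] : List ℕ)) :=
      Computable.encode.comp (Computable.pair Computable.id (Computable.const []))
    have harith : Arith n true fun m => AltQ n true P [] (seqOf m) := by
      refine (arith_comp n true (altq_arith hP n true) hmap).of_iff fun m => ?_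
      simp only [dec, Denumerable.ofNat_encode]
    have h3 : Arith n true fun m => ¬ U n m m := by
      refine harith.of_iff fun m => ?_
      rw [← hiff (seqOf m)]
      show (seqOf m ∈ {A : Cantor | ∃ m, InCyl A m ∧ ¬ U n m m}) ↔ _
      simp only [Set.mem_setOf_eq]
      constructor
      · rintro ⟨m', hic, hU⟩
        rwa [(InCyl_seqOf m m').1 hic] at hU
      · intro hU
        exact ⟨m, (InCyl_seqOf m m).2 rfl, hU⟩
    obtain ⟨n', rfl⟩ : ∃ n', n = n' + 1 := by
      rw [Nat.odd_iff] at hn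
      exact ⟨n - 1, by omega⟩
    obtain ⟨e, he⟩ := arith_univ n' h3
    exact iff_not_self (he e).symm
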